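/- Fix q ∈ D(X) and v̄, w ≥ 0, and suppose v̄ + w < V^{v̄,w}(g;q) + c. Let ṽ := V^{v̄,w}(g;q) + c − w. Then ṽ > v̄ and there exists w̃ ∈ [0, w] such that ṽ + w̃ = V^{ṽ,w̃}(g;q) + c ≥ ṽ, and for every x ∈ X: if U^{v̄,w}(x;q) ≥ V^{v̄,w}(g;q) then U^{ṽ,w̃}(x;q) ≥ V^{ṽ,w̃}(g;q), and if U^{v̄,w}(x;q) ≤ V^{v̄,w}(g;q) then U^{ṽ,w̃}(x;q) ≤ V^{ṽ,w̃}(g;q); that is, any profit-maximizing creation decision of x under (v̄, w) remains profit-maximizing under (ṽ, w̃). -/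

import Mathlib

open MeasureTheory Real Set Filter Topology
open scoped ENNReal

noncomputable section

namespace GenAIPlatform

/-- `D(X)`: upper-semicontinuous densities on `X` with a positive lower bound. -/
def DSet {d : ℕ} (X : Set (Fin d → ℝ)) : Set ((Fin d → ℝ) → ℝ) :=
  {q | UpperSemicontinuousOn q X ∧ ∃ ε : ℝ, 0 < ε ∧ ∀ x ∈ X, ε ≤ q x}

/-- `P(X)`: probability densities on `X`. -/
def PSet {d : ℕ} (X : Set (Fin d → ℝ)) : Set ((Fin d → ℝ) → ℝ) :=
  {q | q ∈ DSet X ∧ ∫ x in X, q x = 1}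

/-- The revenue `V(y;q)` of content `y` under content density `q`. -/
def Rev {d : ℕ} (p : (Fin d → ℝ) → ℝ) (α γ : ℝ) (q : (Fin d → ℝ) → ℝ)
    (y : Fin d → ℝ) : ℝ :=
  (1 - γ) * (p y / q y) ^ α

/-- A compensation scheme `W(x;q)`. -/
abbrev Scheme (d : ℕ) := (Fin d → ℝ) → ((Fin d → ℝ) → ℝ) → ℝ

/-- Compensated revenue `V^W(y;q)`. -/
def RevW {d : ℕ} (p : (Fin d → ℝ) → ℝ) (α γ : ℝ) (W : Scheme d)
    (q : (Fin d → ℝ) → ℝ) (y : Fin d → ℝ) : ℝ :=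
  Rev p α γ q y + W y q

/-- Profit from manual creation `U^W(x;q)`. -/
def UtilW {d : ℕ} (p : (Fin d → ℝ) → ℝ) (α γ c : ℝ) (W : Scheme d)
    (q : (Fin d → ℝ) → ℝ) (x : Fin d → ℝ) : ℝ :=
  RevW p α γ W q x - c

/-- Expected compensated revenue from GenAI `V^W(g;q)`. -/
def RevWg {d : ℕ} (X : Set (Fin d → ℝ)) (p g : (Fin d → ℝ) → ℝ) (α γ : ℝ)
    (W : Scheme d) (q : (Fin d → ℝ) → ℝ) : ℝ :=
  ∫ y in X, RevW p α γ W q y * g y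

/-- The revenue-threshold compensation scheme `(v, w)`. -/
def Wthr {d : ℕ} (p : (Fin d → ℝ) → ℝ) (α γ v w : ℝ) : Scheme d :=
  fun x q => if v ≤ Rev p α γ q x then w else 0

/-- Platform profit `Π^W(q)` (per consumer). -/
def Profit {d : ℕ} (X : Set (Fin d → ℝ)) (p : (Fin d → ℝ) → ℝ) (α γ : ℝ)
    (W : Scheme d) (q : (Fin d → ℝ) → ℝ) : ℝ :=
  γ * ∫ x in X, p x ^ α * q x ^ (1 - α) - ∫ x in X, W x q * q x

/-- Mean-field equilibrium with GenAI available: `β` is the GenAI-usage propensity,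
`q` the content density. -/
def IsEquilibrium {d : ℕ} (X : Set (Fin d → ℝ)) (p g : (Fin d → ℝ) → ℝ)
    (α γ c : ℝ) (W : Scheme d) (β q : (Fin d → ℝ) → ℝ) : Prop :=
  (∀ x ∈ X, β x ∈ Icc (0 : ℝ) 1) ∧ q ∈ DSet X ∧
  (∀ x ∈ X, RevWg X p g α γ W q < UtilW p α γ c W q x → β x = 0) ∧
  (∀ x ∈ X, UtilW p α γ c W q x < RevWg X p g α γ W q → β x = 1) ∧
  (∀ x ∈ X, q x = (1 - β x) * p x + g x * ∫ y in X, β y * p y)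

lemma usc_indicator_of_nonneg {d : ℕ} {X : Set (Fin d → ℝ)} (hX : IsClosed X)
    {f : (Fin d → ℝ) → ℝ} (hf : UpperSemicontinuousOn f X) (h0 : ∀ x ∈ X, 0 ≤ f x) :
    UpperSemicontinuous (X.indicator f) := by
  intro x y hy
  by_cases hx : x ∈ X
  · rw [Set.indicator_of_mem hx] at hy
    have h1 : ∀ᶠ z in 𝓝[X] x, X.indicator f z < y := by
      filter_upwards [hf x hx y hy, self_mem_nhdsWithin] with z hz hzX
      simpa [Set.indicator_of_mem hzX] using hz
    have h2 : ∀ᶠ z in 𝓝[Xᶜ] x, X.indicator f z < y := by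
      filter_upwards [self_mem_nhdsWithin] with z hz
      have : (0:ℝ) < y := lt_of_le_of_lt (h0 x hx) hy
      simpa [Set.indicator_of_notMem hz]
    have hnhds : 𝓝 x = 𝓝[X] x ⊔ 𝓝[Xᶜ] x := by
      rw [← nhdsWithin_union, Set.union_compl_self, nhdsWithin_univ]
    rw [hnhds]
    exact eventually_sup.2 ⟨h1, h2⟩
  · have hy0 : (0:ℝ) < y := by simpa [Set.indicator_of_notMem hx] using hy
    filter_upwards [hX.isOpen_compl.mem_nhds hx] with z hz
    simpa [Set.indicator_of_notMem hz]

lemma usc_bddAbove {d : ℕ} {X : Set (Fin d → ℝ)} (hXc : IsCompact X)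
    {f : (Fin d → ℝ) → ℝ} (hf : UpperSemicontinuousOn f X) (h0 : ∀ x ∈ X, 0 ≤ f x) :
    ∃ M : ℝ, 0 ≤ M ∧ ∀ x ∈ X, f x ≤ M := by
  have hF := usc_indicator_of_nonneg hXc.isClosed hf h0
  have hcov : X ⊆ ⋃ n : ℕ, (X.indicator f) ⁻¹' Iio (n:ℝ) := by
    intro x _
    obtain ⟨n, hn⟩ := exists_nat_gt (X.indicator f x)
    exact mem_iUnion.2 ⟨n, hn⟩
  obtain ⟨t, ht⟩ := hXc.elim_finite_subcover (fun n : ℕ => (X.indicator f) ⁻¹' Iio (n:ℝ)) (fun n => hF.isOpen_preimage (n:ℝ)) hcov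
  refine ⟨(t.sup id : ℕ), by positivity, fun x hx => ?_⟩
  obtain ⟨n, hn, hxn⟩ := mem_iUnion₂.1 (ht hx)
  have : f x < (n:ℝ) := by simpa [Set.indicator_of_mem hx] using hxn
  exact this.le.trans (Nat.cast_le.2 (Finset.le_sup (f := id) hn))

/-- Lemma 2, part 3: reduction of an ineffective threshold. -/
theorem stmt4 {d : ℕ} (hd : 1 ≤ d) (X : Set (Fin d → ℝ))
    (hXc : IsCompact X) (hX0 : 0 < volume X)
    (p g : (Fin d → ℝ) → ℝ) (hp : p ∈ PSet X) (hg : g ∈ PSet X)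
    (α γ c : ℝ) (hα : α ∈ Ioo (0 : ℝ) 1) (hγ : γ ∈ Icc (0 : ℝ) 1) (hc : 0 < c)
    (q : (Fin d → ℝ) → ℝ) (hq : q ∈ DSet X)
    (v w : ℝ) (hv : 0 ≤ v) (hw : 0 ≤ w)
    (h : v + w < RevWg X p g α γ (Wthr p α γ v w) q + c) :
    ∀ vt : ℝ, vt = RevWg X p g α γ (Wthr p α γ v w) q + c - w →
      v < vt ∧
      ∃ wt ∈ Icc (0 : ℝ) w,
        vt + wt = RevWg X p g α γ (Wthr p α γ vt wt) q + c ∧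
        vt ≤ RevWg X p g α γ (Wthr p α γ vt wt) q + c ∧
        ∀ x ∈ X,
          (RevWg X p g α γ (Wthr p α γ v w) q ≤ UtilW p α γ c (Wthr p α γ v w) q x →
            RevWg X p g α γ (Wthr p α γ vt wt) q ≤ UtilW p α γ c (Wthr p α γ vt wt) q x) ∧
          (UtilW p α γ c (Wthr p α γ v w) q x ≤ RevWg X p g α γ (Wthr p α γ v w) q →
            UtilW p α γ c (Wthr p α γ vt wt) q x ≤ RevWg X p g α γ (Wthr p α γ vt wt) q) := by
  intro vt hvt
  classical
  obtain ⟨hq_usc, εq, hεq, hεqle⟩ := hq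
  obtain ⟨⟨hp_usc, εp, hεp, hεple⟩, hp1⟩ := hp
  obtain ⟨⟨hg_usc, εg, hεg, hεgle⟩, hg1⟩ := hg
  have hXm : MeasurableSet X := hXc.isClosed.measurableSet
  have hae : ∀ᵐ y ∂(volume.restrict X), y ∈ X := ae_restrict_mem hXm
  have hp0 : ∀ x ∈ X, 0 ≤ p x := fun x hx => hεp.le.trans (hεple x hx)
  have hq0 : ∀ x ∈ X, 0 ≤ q x := fun x hx => hεq.le.trans (hεqle x hx)
  have hg0 : ∀ x ∈ X, 0 ≤ g x := fun x hx => hεg.le.trans (hεgle x hx)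
  have hpm : Measurable (X.indicator p) :=
    (usc_indicator_of_nonneg hXc.isClosed hp_usc hp0).measurable
  have hqm : Measurable (X.indicator q) :=
    (usc_indicator_of_nonneg hXc.isClosed hq_usc hq0).measurable
  have hgm : Measurable (X.indicator g) :=
    (usc_indicator_of_nonneg hXc.isClosed hg_usc hg0).measurable
  have hVm : Measurable (fun y => (1 - γ) * (X.indicator p y / X.indicator q y) ^ α) :=
    measurable_const.mul ((Real.continuous_rpow_const hα.1.le).measurable.comp (hpm.div hqm))
  have hgInt : Integrable g (volume.restrict X) := by
    by_contra hcon
    rw [MeasureTheory.integral_undef hcon] at hg1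
    norm_num at hg1
  have hγ0 : 0 ≤ 1 - γ := by linarith [hγ.2]
  obtain ⟨M, hM0, hMle⟩ := usc_bddAbove hXc hp_usc hp0
  set C := (1 - γ) * (M / εq) ^ α with hC
  have hRev0 : ∀ y ∈ X, 0 ≤ Rev p α γ q y := fun y hy =>
    mul_nonneg hγ0 (Real.rpow_nonneg (div_nonneg (hp0 y hy) (hq0 y hy)) α)
  have hRevC : ∀ y ∈ X, Rev p α γ q y ≤ C := by
    intro y hy
    have h1 : p y / q y ≤ M / εq :=
      div_le_div₀ hM0 (hMle y hy) hεq (hεqle y hy)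
    have h2 : (p y / q y) ^ α ≤ (M / εq) ^ α :=
      Real.rpow_le_rpow (div_nonneg (hp0 y hy) (hq0 y hy)) h1 hα.1.le
    exact mul_le_mul_of_nonneg_left h2 hγ0
  have hmeas1 : AEStronglyMeasurable (fun y => Rev p α γ q y * g y) (volume.restrict X) := by
    refine ((hVm.mul hgm).aestronglyMeasurable).congr ?_
    filter_upwards [hae] with y hy
    simp [Rev, Set.indicator_of_mem hy]
  have hInt1 : Integrable (fun y => Rev p α γ q y * g y) (volume.restrict X) := by
    refine (hgInt.const_mul C).mono' hmeas1 ?_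
    filter_upwards [hae] with y hy
    rw [Real.norm_eq_abs, abs_of_nonneg (mul_nonneg (hRev0 y hy) (hg0 y hy))]
    exact mul_le_mul_of_nonneg_right (hRevC y hy) (hg0 y hy)
  have hIntm : ∀ t : ℝ, Integrable
      (fun y => (if t ≤ Rev p α γ q y then (1:ℝ) else 0) * g y) (volume.restrict X) := by
    intro t
    have hs : MeasurableSet {y | t ≤ (1 - γ) * (X.indicator p y / X.indicator q y) ^ α} :=
      measurableSet_le measurable_const hVm
    have hmeas : AEStronglyMeasurable
        (fun y => (if t ≤ Rev p α γ q y then (1:ℝ) else 0) * g y) (volume.restrict X) := by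
      have hmeas2 : Measurable (fun y =>
          (if t ≤ (1 - γ) * (X.indicator p y / X.indicator q y) ^ α then (1:ℝ) else 0)
            * X.indicator g y) :=
        (Measurable.ite hs measurable_const measurable_const).mul hgm
      refine hmeas2.aestronglyMeasurable.congr ?_
      filter_upwards [hae] with y hy
      have hVeq : (1 - γ) * (X.indicator p y / X.indicator q y) ^ α = Rev p α γ q y := by
        simp [Rev, Set.indicator_of_mem hy]
      simp only [hVeq, Set.indicator_of_mem hy]
      rfl
    refine hgInt.mono' hmeas ?_
    filter_upwards [hae] with y hy
    have h01 : (0:ℝ) ≤ (if t ≤ Rev p α γ q y then (1:ℝ) else 0) := by split_ifs <;> norm_num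
    have h11 : (if t ≤ Rev p α γ q y then (1:ℝ) else 0) ≤ 1 := by split_ifs <;> norm_num
    rw [Real.norm_eq_abs, abs_of_nonneg (mul_nonneg h01 (hg0 y hy))]
    nlinarith [hg0 y hy]
  set A := ∫ y in X, Rev p α γ q y * g y with hA
  set m := fun t : ℝ => ∫ y in X, (if t ≤ Rev p α γ q y then (1:ℝ) else 0) * g y with hm
  have key : ∀ t w' : ℝ, RevWg X p g α γ (Wthr p α γ t w') q = A + w' * m t := by
    intro t w'
    have hsplit : ∀ y, RevW p α γ (Wthr p α γ t w') q y * g y =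
        Rev p α γ q y * g y + w' * ((if t ≤ Rev p α γ q y then (1:ℝ) else 0) * g y) := by
      intro y
      simp only [RevW, Wthr]
      split_ifs <;> ring
    rw [RevWg]
    simp_rw [hsplit]
    rw [MeasureTheory.integral_add hInt1 ((hIntm t).const_mul w'),
      MeasureTheory.integral_const_mul]
  have hm0 : ∀ t, 0 ≤ m t := by
    intro t
    refine MeasureTheory.integral_nonneg_of_ae ?_
    filter_upwards [hae] with y hy
    have h01 : (0:ℝ) ≤ (if t ≤ Rev p α γ q y then (1:ℝ) else 0) := by split_ifs <;> norm_num
    exact mul_nonneg h01 (hg0 y hy)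
  have hm1 : ∀ t, m t ≤ 1 := by
    intro t
    have : m t ≤ ∫ y in X, g y := by
      refine MeasureTheory.integral_mono_ae (hIntm t) hgInt ?_
      filter_upwards [hae] with y hy
      have hgy := hg0 y hy
      split_ifs <;> simp [hgy]
    linarith [this, hg1.le, hg1.ge]
  have hmmono : ∀ s t : ℝ, s ≤ t → m t ≤ m s := by
    intro s t hst
    refine MeasureTheory.integral_mono_ae (hIntm t) (hIntm s) ?_
    filter_upwards [hae] with y hy
    have hgy := hg0 y hy
    by_cases h1 : t ≤ Rev p α γ q y
    · rw [if_pos h1, if_pos (hst.trans h1)]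
    · rw [if_neg h1, zero_mul]
      have h01 : (0:ℝ) ≤ (if s ≤ Rev p α γ q y then (1:ℝ) else 0) := by split_ifs <;> norm_num
      exact mul_nonneg h01 hgy
  have hG : RevWg X p g α γ (Wthr p α γ v w) q = A + w * m v := key v w
  have hvt' : vt = A + w * m v + c - w := by rw [hvt, hG]
  rw [hG] at h
  have hvlt : v < vt := by linarith
  have hmtv : m vt ≤ m v := hmmono v vt hvlt.le
  -- common pointwise part given a valid wt
  have main : ∀ wt : ℝ, 0 ≤ wt →
      vt + wt = RevWg X p g α γ (Wthr p α γ vt wt) q + c →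
      ∀ x ∈ X,
        (RevWg X p g α γ (Wthr p α γ v w) q ≤ UtilW p α γ c (Wthr p α γ v w) q x →
          RevWg X p g α γ (Wthr p α γ vt wt) q ≤ UtilW p α γ c (Wthr p α γ vt wt) q x) ∧
        (UtilW p α γ c (Wthr p α γ v w) q x ≤ RevWg X p g α γ (Wthr p α γ v w) q →
          UtilW p α γ c (Wthr p α γ vt wt) q x ≤ RevWg X p g α γ (Wthr p α γ vt wt) q) := by
    intro wt hwt0 heq x hx
    simp only [UtilW, RevW, Wthr]
    constructor
    · intro h1
      rw [hG] at h1
      have hvtle : vt ≤ Rev p α γ q x := by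
        by_cases hcase : v ≤ Rev p α γ q x
        · rw [if_pos hcase] at h1; linarith
        · rw [if_neg hcase] at h1; linarith
      rw [if_pos hvtle]
      linarith
    · intro h2
      by_cases hcase : vt ≤ Rev p α γ q x
      · rw [hG, if_pos (hvlt.le.trans hcase)] at h2
        rw [if_pos hcase]
        linarith
      · rw [if_neg hcase]
        push_neg at hcase
        linarith
  refine ⟨hvlt, ?_⟩
  by_cases hmt : m vt = 1
  · have hmv : m v = 1 := le_antisymm (hm1 v) (by rw [← hmt]; exact hmtv)
    have heq : vt + w = RevWg X p g α γ (Wthr p α γ vt w) q + c := by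
      rw [key vt w, hmt]; rw [hmv] at hvt'; linarith
    exact ⟨w, ⟨hw, le_refl w⟩, heq, by linarith, main w hw heq⟩
  · have hlt : m vt < 1 := lt_of_le_of_ne (hm1 vt) hmt
    have h1mt : 0 < 1 - m vt := by linarith
    set wt := w * (1 - m v) / (1 - m vt) with hwt
    have hwt0 : 0 ≤ wt := div_nonneg (mul_nonneg hw (by linarith [hm1 v])) h1mt.le
    have hwtw : wt ≤ w := by
      rw [hwt, div_le_iff₀ h1mt]
      nlinarith [hm1 v]
    have hkey : wt * (1 - m vt) = w * (1 - m v) := by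
      rw [hwt]; field_simp
    have heq : vt + wt = RevWg X p g α γ (Wthr p α γ vt wt) q + c := by
      rw [key vt wt]
      nlinarith [hvt']
    exact ⟨wt, ⟨hwt0, hwtw⟩, heq, by linarith, main wt hwt0 heq⟩

end GenAIPlatform
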